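/- Suppose $n = m(m+1)$ for some integer $m \geq 1$, so that $\Delta_n = ((m+1)t-m)(mt-(m+1))$ is reducible. Define ring homomorphisms $f_1, f_2 \colon \mathbb{Z}[t,t^{-1}] \to \mathbb{Z}[1/n]$ by $f_1(t) = m/(m+1)$ and $f_2(t) = (m+1)/m$. Then $f = f_1 \oplus f_2 \colon \mathbb{Z}[t,t^{-1}] \to \mathbb{Z}[1/n] \oplus \mathbb{Z}[1/n]$ has kernel exactly $(\Delta_n)$, and its image is the subring $S = \{(a,b) : b - a \in (2m+1)\cdot\mathbb{Z}[1/n]\}$. Hence $\Lambda_n = \mathbb{Z}[t,t^{-1}]/(\Delta_n) \cong S$. -/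

import Mathlib

open LaurentPolynomial in
/-- `Δₙ = n t² - (2n+1) t + n` as a Laurent polynomial over `ℤ`. -/
noncomputable def DeltaL (n : ℤ) : LaurentPolynomial ℤ :=
  LaurentPolynomial.C n * T 2 - LaurentPolynomial.C (2 * n + 1) * T 1 + LaurentPolynomial.C n

/-- `ℤ[1/n]`, the localization of `ℤ` inverting `n = m(m+1)`. -/
abbrev ZInv (m : ℤ) := Localization.Away ((m * (m + 1) : ℤ))

noncomputable section Stmt16Aux
namespace Stmt16Aux
open LaurentPolynomial Polynomial

variable (m : ℤ)

lemma isUnit_n : IsUnit (algebraMap ℤ (ZInv m) (m * (m + 1))) :=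
  IsLocalization.Away.algebraMap_isUnit _

lemma isUnit_m : IsUnit (algebraMap ℤ (ZInv m) m) := by
  have := isUnit_n m
  rw [map_mul] at this
  exact isUnit_of_mul_isUnit_left this

lemma isUnit_m1 : IsUnit (algebraMap ℤ (ZInv m) (m + 1)) := by
  have := isUnit_n m
  rw [map_mul] at this
  exact isUnit_of_mul_isUnit_right this

/-- `m/(m+1)` as a unit. -/
def u1 : (ZInv m)ˣ := (isUnit_m m).unit * ((isUnit_m1 m).unit)⁻¹
/-- `(m+1)/m` as a unit. -/
def u2 : (ZInv m)ˣ := (isUnit_m1 m).unit * ((isUnit_m m).unit)⁻¹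

lemma u1_val : (u1 m : ZInv m) =
    algebraMap ℤ (ZInv m) m * Ring.inverse (algebraMap ℤ (ZInv m) (m + 1)) := by
  rw [u1, Units.val_mul, IsUnit.unit_spec, ← Ring.inverse_unit, IsUnit.unit_spec]

lemma u2_val : (u2 m : ZInv m) =
    algebraMap ℤ (ZInv m) (m + 1) * Ring.inverse (algebraMap ℤ (ZInv m) m) := by
  rw [u2, Units.val_mul, IsUnit.unit_spec, ← Ring.inverse_unit, IsUnit.unit_spec]

lemma key1 : algebraMap ℤ (ZInv m) (m + 1) * (u1 m : ZInv m) = algebraMap ℤ (ZInv m) m := by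
  have h := Units.mul_inv (isUnit_m1 m).unit
  rw [IsUnit.unit_spec] at h
  rw [u1, Units.val_mul, IsUnit.unit_spec]
  linear_combination (algebraMap ℤ (ZInv m) m) * h

lemma key2 : algebraMap ℤ (ZInv m) m * (u2 m : ZInv m) = algebraMap ℤ (ZInv m) (m + 1) := by
  have h := Units.mul_inv (isUnit_m m).unit
  rw [IsUnit.unit_spec] at h
  rw [u2, Units.val_mul, IsUnit.unit_spec]
  linear_combination (algebraMap ℤ (ZInv m) (m + 1)) * h

/-- evaluation of a Laurent polynomial at a unit -/
def evalU (u : (ZInv m)ˣ) : LaurentPolynomial ℤ →+* ZInv m :=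
  ((AddMonoidAlgebra.lift ℤ (ZInv m) ℤ)
    ((Units.coeHom (ZInv m)).comp (zpowersHom (ZInv m)ˣ u))).toRingHom

lemma evalU_T (u : (ZInv m)ˣ) (k : ℤ) : evalU m u (T k) = ((u ^ k : (ZInv m)ˣ) : ZInv m) := by
  have h : (T k : LaurentPolynomial ℤ) = AddMonoidAlgebra.single k 1 := rfl
  rw [evalU, AlgHom.toRingHom_eq_coe, RingHom.coe_coe, h, AddMonoidAlgebra.lift_single]
  simp

lemma evalU_C (u : (ZInv m)ˣ) (a : ℤ) : evalU m u (LaurentPolynomial.C a) =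
    algebraMap ℤ (ZInv m) a := by
  simp [evalU, LaurentPolynomial.C, LaurentPolynomial.single_eq_C_mul_T,
    AddMonoidAlgebra.lift_single]

lemma evalU_single (u : (ZInv m)ˣ) (k : ℤ) (a : ℤ) :
    evalU m u (LaurentPolynomial.C a * T k) = algebraMap ℤ (ZInv m) a * ((u ^ k : (ZInv m)ˣ) : ZInv m) := by
  rw [map_mul, evalU_C, evalU_T]

/-- the factor `(m+1) X - m` -/
def P1 : ℤ[X] := Polynomial.C (m + 1) * X - Polynomial.C m
/-- the factor `m X - (m+1)` -/
def P2 : ℤ[X] := Polynomial.C m * X - Polynomial.C (m + 1)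

lemma polyEq : P1 m * P2 m =
    Polynomial.C (m * (m + 1)) * X ^ 2 - Polynomial.C (2 * (m * (m + 1)) + 1) * X
      + Polynomial.C (m * (m + 1)) := by
  simp only [P1, P2]
  rw [show (2*(m*(m+1))+1 : ℤ) = (m+1)*(m+1) + m*m by ring,
    show (m*(m+1):ℤ) = (m+1)*m by ring]
  simp only [Polynomial.C_mul, Polynomial.C_add]
  ring

lemma deltaEq : Polynomial.toLaurent (P1 m * P2 m) = DeltaL (m * (m + 1)) := by
  rw [polyEq]
  simp only [map_add, map_sub, map_mul, map_pow, Polynomial.toLaurent_C, Polynomial.toLaurent_X,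
    DeltaL, T_pow]
  norm_num

lemma evalU_P1 : evalU m (u1 m) (Polynomial.toLaurent (P1 m)) = 0 := by
  simp only [P1, map_sub, map_mul, Polynomial.toLaurent_C, Polynomial.toLaurent_X,
    evalU_C, evalU_T, zpow_one]
  rw [key1, sub_self]

lemma evalU_P2 : evalU m (u2 m) (Polynomial.toLaurent (P2 m)) = 0 := by
  simp only [P2, map_sub, map_mul, Polynomial.toLaurent_C, Polynomial.toLaurent_X,
    evalU_C, evalU_T, zpow_one]
  rw [key2, sub_self]

/-- the combined map `f = f₁ ⊕ f₂` -/
def F : LaurentPolynomial ℤ →+* (ZInv m × ZInv m) :=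
  (evalU m (u1 m)).prod (evalU m (u2 m))

lemma F_delta : F m (DeltaL (m * (m + 1))) = 0 := by
  rw [← deltaEq]
  have h1 : evalU m (u1 m) (Polynomial.toLaurent (P1 m * P2 m)) = 0 := by
    rw [map_mul, map_mul, evalU_P1, zero_mul]
  have h2 : evalU m (u2 m) (Polynomial.toLaurent (P1 m * P2 m)) = 0 := by
    rw [map_mul, map_mul, evalU_P2, mul_zero]
  have : F m (Polynomial.toLaurent (P1 m * P2 m)) =
      (evalU m (u1 m) (Polynomial.toLaurent (P1 m * P2 m)),
       evalU m (u2 m) (Polynomial.toLaurent (P1 m * P2 m))) := rfl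
  rw [this, h1, h2]
  rfl


lemma P1_prim : (P1 m).IsPrimitive := by
  intro r hr
  rw [Polynomial.C_dvd_iff_dvd_coeff] at hr
  have h0 := hr 0
  have h1 := hr 1
  have c0 : (P1 m).coeff 0 = -m := by
    simp only [P1, Polynomial.coeff_sub, Polynomial.coeff_C_mul, Polynomial.coeff_X_zero,
      Polynomial.coeff_C_zero, mul_zero, zero_sub]
  have c1 : (P1 m).coeff 1 = m + 1 := by
    simp only [P1, Polynomial.coeff_sub, Polynomial.coeff_C_mul, Polynomial.coeff_X_one,
      Polynomial.coeff_C, mul_one]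
    norm_num
  rw [c0] at h0; rw [c1] at h1
  have : r ∣ 1 := by
    have := dvd_add h1 h0
    simpa using this
  exact isUnit_of_dvd_one this

lemma P2_prim : (P2 m).IsPrimitive := by
  intro r hr
  rw [Polynomial.C_dvd_iff_dvd_coeff] at hr
  have h0 := hr 0
  have h1 := hr 1
  have c0 : (P2 m).coeff 0 = -(m+1) := by
    simp only [P2, Polynomial.coeff_sub, Polynomial.coeff_C_mul, Polynomial.coeff_X_zero,
      Polynomial.coeff_C_zero, mul_zero, zero_sub]
  have c1 : (P2 m).coeff 1 = m := by
    simp only [P2, Polynomial.coeff_sub, Polynomial.coeff_C_mul, Polynomial.coeff_X_one,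
      Polynomial.coeff_C, mul_one]
    norm_num
  rw [c0] at h0; rw [c1] at h1
  have : r ∣ 1 := by
    have := dvd_add h1 h0
    simpa using this
  exact isUnit_of_dvd_one this

variable (hm : 1 ≤ m)
include hm

lemma n_unit_Q : IsUnit (Int.castRingHom ℚ (m * (m + 1))) := by
  rw [isUnit_iff_ne_zero]
  have h1 : (0:ℤ) < m := hm
  have : (0:ℤ) < m * (m+1) := by positivity
  simp only [eq_intCast, ne_eq, Int.cast_eq_zero]
  omega

/-- the map `ℤ[1/n] → ℚ` -/
def J : ZInv m →+* ℚ := Localization.awayLift (Int.castRingHom ℚ) _ (n_unit_Q m hm)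

lemma J_alg (a : ℤ) : J m hm (algebraMap ℤ (ZInv m) a) = (a : ℚ) :=
  IsLocalization.Away.lift_eq _ (n_unit_Q m hm) a

lemma J_u1 : ((m:ℚ) + 1) * J m hm ((u1 m : ZInv m)) = m := by
  have := congrArg (J m hm) (key1 m)
  rw [map_mul, J_alg, J_alg] at this
  push_cast at this ⊢
  linarith [this]

lemma J_u2 : (m:ℚ) * J m hm ((u2 m : ZInv m)) = (m:ℚ) + 1 := by
  have := congrArg (J m hm) (key2 m)
  rw [map_mul, J_alg, J_alg] at this
  push_cast at this ⊢
  linarith [this]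

lemma J_eval (u : (ZInv m)ˣ) (q : ℤ[X]) :
    J m hm (evalU m u (Polynomial.toLaurent q)) =
      Polynomial.eval₂ (Int.castRingHom ℚ) (J m hm (u : ZInv m)) q := by
  have h : (J m hm).comp ((evalU m u).comp Polynomial.toLaurent) =
      Polynomial.eval₂RingHom (Int.castRingHom ℚ) (J m hm (u : ZInv m)) := by
    apply Polynomial.ringHom_ext
    · intro a
      simp [Polynomial.toLaurent_C, evalU_C, J_alg]
    · simp [Polynomial.toLaurent_X, evalU_T, zpow_one]
  have := congrArg (fun g : ℤ[X] →+* ℚ => g q) h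
  simpa using this

lemma ne_roots : J m hm ((u1 m : ZInv m)) ≠ J m hm ((u2 m : ZInv m)) := by
  intro h
  have h1 := J_u1 m hm
  have h2 := J_u2 m hm
  have hm' : (1:ℚ) ≤ (m:ℚ) := by exact_mod_cast hm
  rw [h] at h1
  have : (m:ℚ) * ((m:ℚ) * J m hm ((u2 m : ZInv m))) = (m:ℚ) * (m:ℚ) := by
    rw [h2]; nlinarith [h1]
  nlinarith [this, h2, h1]

/-- Gauss-lemma step: a polynomial vanishing at both roots is divisible by `P1 * P2`. -/
lemma dvd_of_roots (q : ℤ[X])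
    (hq1 : Polynomial.eval₂ (Int.castRingHom ℚ) (J m hm (u1 m : ZInv m)) q = 0)
    (hq2 : Polynomial.eval₂ (Int.castRingHom ℚ) (J m hm (u2 m : ZInv m)) q = 0) :
    P1 m * P2 m ∣ q := by
  rcases eq_or_ne q 0 with rfl | hq0
  · exact dvd_zero _
  set a := J m hm (u1 m : ZInv m) with ha_def
  set b := J m hm (u2 m : ZInv m) with hb_def
  have ha' : ((m:ℚ)+1) * a = m := J_u1 m hm
  have hb' : (m:ℚ) * b = (m:ℚ) + 1 := J_u2 m hm
  have hmap1 : (P1 m).map (Int.castRingHom ℚ) = Polynomial.C ((m:ℚ)+1) * (X - Polynomial.C a) := by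
    rw [mul_sub, ← Polynomial.C_mul, ha']
    simp only [P1, Polynomial.map_sub, Polynomial.map_mul, Polynomial.map_C, Polynomial.map_X,
      eq_intCast, Polynomial.map_intCast, Polynomial.C_eq_intCast]
    push_cast [Polynomial.C_add, Polynomial.C_1, Polynomial.C_eq_intCast]
    ring
  have hmap2 : (P2 m).map (Int.castRingHom ℚ) = Polynomial.C (m:ℚ) * (X - Polynomial.C b) := by
    rw [mul_sub, ← Polynomial.C_mul, hb']
    simp only [P2, Polynomial.map_sub, Polynomial.map_mul, Polynomial.map_C, Polynomial.map_X,
      eq_intCast, Polynomial.map_intCast, Polynomial.C_eq_intCast]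
    push_cast [Polynomial.C_add, Polynomial.C_1, Polynomial.C_eq_intCast]
    ring
  have hd1 : (X - Polynomial.C a) ∣ q.map (Int.castRingHom ℚ) := by
    rw [Polynomial.dvd_iff_isRoot]
    rw [Polynomial.IsRoot, Polynomial.eval_map]
    exact hq1
  have hd2 : (X - Polynomial.C b) ∣ q.map (Int.castRingHom ℚ) := by
    rw [Polynomial.dvd_iff_isRoot]
    rw [Polynomial.IsRoot, Polynomial.eval_map]
    exact hq2
  have hcop : IsCoprime (X - Polynomial.C a) (X - Polynomial.C b) :=
    Polynomial.isCoprime_X_sub_C_of_isUnit_sub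
      ((sub_ne_zero_of_ne (ne_roots m hm)).isUnit)
  have hprod : (X - Polynomial.C a) * (X - Polynomial.C b) ∣ q.map (Int.castRingHom ℚ) :=
    hcop.mul_dvd hd1 hd2
  have hcunit : IsUnit (Polynomial.C (((m:ℚ)+1) * (m:ℚ))) := by
    rw [Polynomial.isUnit_C, isUnit_iff_ne_zero]
    have hm' : (1:ℚ) ≤ (m:ℚ) := by exact_mod_cast hm
    nlinarith
  have hPmapdvd : (P1 m * P2 m).map (Int.castRingHom ℚ) ∣ q.map (Int.castRingHom ℚ) := by
    rw [Polynomial.map_mul, hmap1, hmap2,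
      show Polynomial.C ((m:ℚ)+1) * (X - Polynomial.C a) * (Polynomial.C (m:ℚ) * (X - Polynomial.C b))
        = Polynomial.C (((m:ℚ)+1) * (m:ℚ)) * ((X - Polynomial.C a) * (X - Polynomial.C b)) by
          rw [Polynomial.C_mul]; ring]
    exact (hcunit.mul_left_dvd).mpr hprod
  have hPprim : (P1 m * P2 m).IsPrimitive := (P1_prim m).mul (P2_prim m)
  have hcont : (q.content : ℚ) ≠ 0 := by
    simpa [Polynomial.content_eq_zero_iff] using hq0
  have hcu : IsUnit (Polynomial.C (q.content : ℚ)) := by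
    rw [Polynomial.isUnit_C, isUnit_iff_ne_zero]; exact hcont
  have hqdecomp : q.map (Int.castRingHom ℚ) =
      Polynomial.C (q.content : ℚ) * q.primPart.map (Int.castRingHom ℚ) := by
    conv_lhs => rw [q.eq_C_content_mul_primPart]
    rw [Polynomial.map_mul, Polynomial.map_C]
    norm_num
  have hdvdprim : (P1 m * P2 m).map (Int.castRingHom ℚ) ∣
      q.primPart.map (Int.castRingHom ℚ) := by
    have := hPmapdvd
    rw [hqdecomp] at this
    exact (hcu.dvd_mul_left).mp this
  have hq' : (P1 m * P2 m) ∣ q.primPart :=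
    (Polynomial.IsPrimitive.Int.dvd_iff_map_cast_dvd_map_cast _ _ hPprim).mpr hdvdprim
  exact hq'.trans q.primPart_dvd


omit hm in
lemma F_apply (p : LaurentPolynomial ℤ) :
    F m p = (evalU m (u1 m) p, evalU m (u2 m) p) := rfl

omit hm in
lemma F_delta' : F m (DeltaL (m * (m + 1))) = 0 := F_delta m

lemma ker_F : RingHom.ker (F m) = Ideal.span {DeltaL (m * (m + 1))} := by
  ext p
  rw [RingHom.mem_ker, Ideal.mem_span_singleton]
  constructor
  · intro hp
    have h1 : evalU m (u1 m) p = 0 := by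
      have := congrArg Prod.fst hp; simpa [F_apply] using this
    have h2 : evalU m (u2 m) p = 0 := by
      have := congrArg Prod.snd hp; simpa [F_apply] using this
    obtain ⟨k, q, hq⟩ := p.exists_T_pow
    have hq1 : evalU m (u1 m) (Polynomial.toLaurent q) = 0 := by
      rw [hq, map_mul, h1, zero_mul]
    have hq2 : evalU m (u2 m) (Polynomial.toLaurent q) = 0 := by
      rw [hq, map_mul, h2, zero_mul]
    have hr1 : Polynomial.eval₂ (Int.castRingHom ℚ) (J m hm (u1 m : ZInv m)) q = 0 := by
      rw [← J_eval m hm, hq1, map_zero]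
    have hr2 : Polynomial.eval₂ (Int.castRingHom ℚ) (J m hm (u2 m : ZInv m)) q = 0 := by
      rw [← J_eval m hm, hq2, map_zero]
    have hdvd : P1 m * P2 m ∣ q := dvd_of_roots m hm q hr1 hr2
    have hdvd2 : DeltaL (m * (m + 1)) ∣ Polynomial.toLaurent q := by
      rw [← deltaEq]
      exact map_dvd _ hdvd
    have hp_eq : p = Polynomial.toLaurent q * T (-(k : ℤ)) := by
      rw [hq, mul_assoc, ← T_add]
      simp
    rw [hp_eq]
    exact hdvd2.mul_right _
  · rintro ⟨c, rfl⟩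
    rw [map_mul, F_delta m, zero_mul]

omit hm in
lemma u_diff : (u2 m : ZInv m) - (u1 m : ZInv m) =
    algebraMap ℤ (ZInv m) (2 * m + 1) * ((((isUnit_n m).unit)⁻¹ : (ZInv m)ˣ) : ZInv m) := by
  have hn := Units.mul_inv (isUnit_n m).unit
  rw [IsUnit.unit_spec] at hn
  have k1 := key1 m
  have k2 := key2 m
  have e2m1 : (2 * m + 1 : ℤ) = (m + 1) * (m + 1) - m * m := by ring
  rw [e2m1, map_sub, map_mul, map_mul]
  set x1 : ZInv m := (u1 m : ZInv m)
  set x2 : ZInv m := (u2 m : ZInv m)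
  set w : ZInv m := ((((isUnit_n m).unit)⁻¹ : (ZInv m)ˣ) : ZInv m)
  set A : ZInv m := algebraMap ℤ (ZInv m) m
  set B : ZInv m := algebraMap ℤ (ZInv m) (m + 1)
  have hn2 : A * B * w = 1 := by rw [← map_mul]; exact hn
  linear_combination (-(x2 - x1)) * hn2 + B * w * k2 - A * w * k1

omit hm in
lemma diff_mem (p : LaurentPolynomial ℤ) : ∃ c : ZInv m,
    evalU m (u2 m) p - evalU m (u1 m) p = algebraMap ℤ (ZInv m) (2 * m + 1) * c := by
  suffices h : evalU m (u2 m) p - evalU m (u1 m) p ∈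
      Ideal.span {algebraMap ℤ (ZInv m) (2 * m + 1)} by
    rw [Ideal.mem_span_singleton] at h
    obtain ⟨c, hc⟩ := h
    exact ⟨c, hc⟩
  set I := Ideal.span {algebraMap ℤ (ZInv m) (2 * m + 1)} with hI
  induction p using LaurentPolynomial.induction_on' with
  | add p q hp hq =>
    have : evalU m (u2 m) (p + q) - evalU m (u1 m) (p + q) =
        (evalU m (u2 m) p - evalU m (u1 m) p) + (evalU m (u2 m) q - evalU m (u1 m) q) := by
      rw [map_add, map_add]; ring
    rw [this]
    exact I.add_mem hp hq
  | C_mul_T k a =>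
    rw [evalU_single, evalU_single, ← mul_sub]
    apply Ideal.mul_mem_left
    have hdiff : (u2 m : ZInv m) - (u1 m : ZInv m) ∈ I := by
      rw [u_diff m, hI]
      exact Ideal.mul_mem_right _ _ (Ideal.subset_span rfl)
    have hu : Units.map (Ideal.Quotient.mk I).toMonoidHom (u1 m)
        = Units.map (Ideal.Quotient.mk I).toMonoidHom (u2 m) := by
      apply Units.ext
      show Ideal.Quotient.mk I ((u1 m : ZInv m)) = Ideal.Quotient.mk I ((u2 m : ZInv m))
      rw [← sub_eq_zero, ← map_sub, Ideal.Quotient.eq_zero_iff_mem]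
      have := I.neg_mem hdiff
      simpa using this
    rw [← Ideal.Quotient.eq_zero_iff_mem, map_sub]
    have e1 : Ideal.Quotient.mk I ((u1 m ^ k : (ZInv m)ˣ) : ZInv m)
        = ((Units.map (Ideal.Quotient.mk I).toMonoidHom (u1 m)) ^ k : _ˣ) := by
      rw [← map_zpow]
      exact (Units.coe_map ((Ideal.Quotient.mk I).toMonoidHom) (u1 m ^ k)).symm
    have e2 : Ideal.Quotient.mk I ((u2 m ^ k : (ZInv m)ˣ) : ZInv m)
        = ((Units.map (Ideal.Quotient.mk I).toMonoidHom (u2 m)) ^ k : _ˣ) := by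
      rw [← map_zpow]
      exact (Units.coe_map ((Ideal.Quotient.mk I).toMonoidHom) (u2 m ^ k)).symm
    rw [e1, e2, hu, sub_self]

/-- the element `(1 - t)(t⁻¹ - 1)` which evaluates to `1/n` under both maps -/
def wit : LaurentPolynomial ℤ := (1 - T 1) * (T (-1) - 1)

omit hm in
lemma evalU_wit (u : (ZInv m)ˣ) :
    evalU m u wit = (1 - (u : ZInv m)) * (((u⁻¹ : (ZInv m)ˣ) : ZInv m) - 1) := by
  rw [wit, map_mul, map_sub, map_sub, map_one, evalU_T, evalU_T, zpow_one, zpow_neg_one]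

omit hm in
lemma hab : algebraMap ℤ (ZInv m) (m + 1) = algebraMap ℤ (ZInv m) m + 1 := by
  rw [map_add, map_one]

omit hm in
lemma wit1 : evalU m (u1 m) wit * algebraMap ℤ (ZInv m) (m * (m + 1)) = 1 := by
  have k1 := key1 m
  have hxy := Units.mul_inv (u1 m)
  have h_ab := hab m
  set x : ZInv m := (u1 m : ZInv m) with hxdef
  set y : ZInv m := (((u1 m)⁻¹ : (ZInv m)ˣ) : ZInv m) with hydef
  set A : ZInv m := algebraMap ℤ (ZInv m) m with hAdef
  set B : ZInv m := algebraMap ℤ (ZInv m) (m + 1) with hBdef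
  have h1 : (1 - x) * B = 1 := by linear_combination h_ab - k1
  have h2 : (y - 1) * A = 1 := by linear_combination h_ab - y * k1 + B * hxy
  rw [evalU_wit, map_mul, ← hxdef, ← hydef, ← hAdef, ← hBdef]
  calc (1 - x) * (y - 1) * (A * B) = ((1 - x) * B) * ((y - 1) * A) := by ring
    _ = 1 := by rw [h1, h2, mul_one]

omit hm in
lemma wit2 : evalU m (u2 m) wit * algebraMap ℤ (ZInv m) (m * (m + 1)) = 1 := by
  have k2 := key2 m
  have hxy := Units.mul_inv (u2 m)
  have h_ab := hab m
  set x : ZInv m := (u2 m : ZInv m) with hxdef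
  set y : ZInv m := (((u2 m)⁻¹ : (ZInv m)ˣ) : ZInv m) with hydef
  set A : ZInv m := algebraMap ℤ (ZInv m) m with hAdef
  set B : ZInv m := algebraMap ℤ (ZInv m) (m + 1) with hBdef
  have h1 : (1 - x) * A = -1 := by linear_combination -k2 - h_ab
  have h2 : (y - 1) * B = -1 := by linear_combination -h_ab - y * k2 + A * hxy
  rw [evalU_wit, map_mul, ← hxdef, ← hydef, ← hAdef, ← hBdef]
  calc (1 - x) * (y - 1) * (A * B) = ((1 - x) * A) * ((y - 1) * B) := by ring
    _ = 1 := by rw [h1, h2]; ring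

omit hm in
lemma evalU_surj (u : (ZInv m)ˣ)
    (hw : evalU m u wit * algebraMap ℤ (ZInv m) (m * (m + 1)) = 1) :
    Function.Surjective (evalU m u) := by
  intro x
  obtain ⟨k, z, hx⟩ := IsLocalization.Away.surj (S := ZInv m) (m * (m + 1)) x
  refine ⟨LaurentPolynomial.C z * wit ^ k, ?_⟩
  rw [map_mul, map_pow, evalU_C]
  calc algebraMap ℤ (ZInv m) z * evalU m u wit ^ k
      = (x * algebraMap ℤ (ZInv m) (m * (m + 1)) ^ k) * evalU m u wit ^ k := by rw [hx]
    _ = x * (evalU m u wit * algebraMap ℤ (ZInv m) (m * (m + 1))) ^ k := by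
        rw [mul_pow]; ring
    _ = x := by rw [hw, one_pow, mul_one]

end Stmt16Aux
end Stmt16Aux

set_option maxHeartbeats 1000000 in
/-- for `n = m(m+1)` (`m ≥ 1`), the homomorphism
`f = f₁ ⊕ f₂ : ℤ[t,t⁻¹] → ℤ[1/n] ⊕ ℤ[1/n]` with `f₁(t) = m/(m+1)`, `f₂(t) = (m+1)/m`
has kernel exactly `(Δₙ)` and image the subring `S = {(a,b) : b - a ∈ (2m+1)·ℤ[1/n]}`;
hence `Λₙ ≅ S`. -/
theorem stmt16 (m : ℤ) (hm : 1 ≤ m) :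
    ∃ f : LaurentPolynomial ℤ →+* (ZInv m × ZInv m),
      f (LaurentPolynomial.T 1) =
        (algebraMap ℤ (ZInv m) m * Ring.inverse (algebraMap ℤ (ZInv m) (m + 1)),
         algebraMap ℤ (ZInv m) (m + 1) * Ring.inverse (algebraMap ℤ (ZInv m) m)) ∧
      RingHom.ker f = Ideal.span {DeltaL (m * (m + 1))} ∧
      Set.range f = {x : ZInv m × ZInv m |
        ∃ c : ZInv m, x.2 - x.1 = algebraMap ℤ (ZInv m) (2 * m + 1) * c} := by
  classical
  open Stmt16Aux in
  refine ⟨Stmt16Aux.F m, ?_, Stmt16Aux.ker_F m hm, ?_⟩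
  · rw [Stmt16Aux.F_apply, Stmt16Aux.evalU_T, Stmt16Aux.evalU_T, zpow_one, zpow_one,
      Stmt16Aux.u1_val, Stmt16Aux.u2_val]
  · ext x
    simp only [Set.mem_range, Set.mem_setOf_eq]
    constructor
    · rintro ⟨p, rfl⟩
      exact Stmt16Aux.diff_mem m p
    · rintro ⟨c, hc⟩
      obtain ⟨p1, hp1⟩ := Stmt16Aux.evalU_surj m (Stmt16Aux.u1 m) (Stmt16Aux.wit1 m) x.1
      obtain ⟨c', hc'⟩ := Stmt16Aux.diff_mem m p1
      obtain ⟨r, hr⟩ := Stmt16Aux.evalU_surj m (Stmt16Aux.u2 m) (Stmt16Aux.wit2 m)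
        (algebraMap ℤ (ZInv m) m * (c - c'))
      set g : LaurentPolynomial ℤ :=
        LaurentPolynomial.C (m + 1) * LaurentPolynomial.T 1 - LaurentPolynomial.C m with hgdef
      have hg1 : Stmt16Aux.evalU m (Stmt16Aux.u1 m) g = 0 := by
        rw [hgdef, map_sub, map_mul, Stmt16Aux.evalU_C, Stmt16Aux.evalU_T, Stmt16Aux.evalU_C,
          zpow_one, Stmt16Aux.key1, sub_self]
      have hg2 : Stmt16Aux.evalU m (Stmt16Aux.u2 m) g * algebraMap ℤ (ZInv m) m
          = algebraMap ℤ (ZInv m) (2 * m + 1) := by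
        rw [hgdef, map_sub, map_mul, Stmt16Aux.evalU_C, Stmt16Aux.evalU_T, Stmt16Aux.evalU_C,
          zpow_one]
        have k2 := Stmt16Aux.key2 m
        have h2m1 : (2 * m + 1 : ℤ) = (m + 1) * (m + 1) - m * m := by ring
        rw [h2m1, map_sub, map_mul, map_mul]
        linear_combination algebraMap ℤ (ZInv m) (m + 1) * k2
      refine ⟨p1 + g * r, ?_⟩
      have hfst : Stmt16Aux.evalU m (Stmt16Aux.u1 m) (p1 + g * r) = x.1 := by
        rw [map_add, map_mul, hg1, zero_mul, add_zero, hp1]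
      have hsnd : Stmt16Aux.evalU m (Stmt16Aux.u2 m) (p1 + g * r) = x.2 := by
        rw [map_add, map_mul, hr]
        linear_combination (c - c') * hg2 + hc' + hp1 - hc
      rw [Stmt16Aux.F_apply, hfst, hsnd]
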